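/- (Remark after the Theorems.) The function Φ defined by Φ(x) = ω'(x) ∫₀^x (e^{−2y}/ω'(y)²) (∫_{−∞}^y ω'(z)² e^{2z} dz) dy is the unique solution of the boundary value problem Φ''(x) + 2Φ'(x) + (1 − 2ω(x))Φ(x) = ω'(x) for all x ∈ ℝ, Φ(0) = 0, and Φ(x) → 0 as x → −∞. -/

import Mathlib

open Filter Asymptotics MeasureTheory intervalIntegral Set


lemma kexp_intervalIntegral (c t y : ℝ) (hc : c ≠ 0) :
    (∫ z in t..y, Real.exp (c*z)) = (Real.exp (c*y) - Real.exp (c*t))/c := by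
  rw [intervalIntegral.integral_comp_mul_left (fun z => Real.exp z) hc, integral_exp, smul_eq_mul]
  field_simp

lemma kexp_integrableOn (c y : ℝ) (hc : 0 < c) :
    IntegrableOn (fun z => Real.exp (c*z)) (Iic y) := by
  have hii : ∀ t : ℝ, IntervalIntegrable (fun z => Real.exp (c*z)) volume t y :=
    fun t => (Real.continuous_exp.comp (continuous_const.mul continuous_id)).intervalIntegrable t y
  refine integrableOn_Iic_of_intervalIntegral_norm_bounded (Real.exp (c*y)/c) y
    (fun t => (hii t).1) tendsto_id ?_
  filter_upwards with t
  rw [show (fun z => ‖Real.exp (c*z)‖) = (fun z => Real.exp (c*z)) by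
    funext z; rw [Real.norm_eq_abs, abs_of_pos (Real.exp_pos _)]]
  rw [kexp_intervalIntegral c t y (ne_of_gt hc)]
  have h1 := Real.exp_pos (c*t)
  gcongr
  linarith

lemma kexp_integral (c y : ℝ) (hc : 0 < c) :
    ∫ z in Iic y, Real.exp (c*z) = Real.exp (c*y)/c := by
  refine tendsto_nhds_unique
    (intervalIntegral_tendsto_integral_Iic _ (kexp_integrableOn c y hc) tendsto_id) ?_
  have h1 : Tendsto (fun t : ℝ => (Real.exp (c*y) - Real.exp (c*t))/c) atBot
      (nhds ((Real.exp (c*y) - 0)/c)) := by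
    refine Tendsto.div_const ?_ c
    refine (tendsto_const_nhds.sub ?_)
    exact Real.tendsto_exp_atBot.comp (tendsto_id.const_mul_atBot hc)
  rw [sub_zero] at h1
  refine h1.congr ?_
  intro t
  exact (kexp_intervalIntegral c t y (ne_of_gt hc)).symm

section
variable {ω : ℝ → ℝ}

lemma kpp_diff (hs : ContDiff ℝ 2 ω) : Differentiable ℝ ω :=
  hs.differentiable (by norm_num)

lemma kpp_diff1 (hs : ContDiff ℝ 2 ω) : ContDiff ℝ 1 (deriv ω) := by
  have h : ContDiff ℝ ((1 : ℕ) + 1) ω := by exact_mod_cast hs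
  exact (contDiff_succ_iff_deriv.mp h).2.2

lemma kpp_diff1' (hs : ContDiff ℝ 2 ω) : Differentiable ℝ (deriv ω) :=
  (kpp_diff1 hs).differentiable (by norm_num)

lemma kpp_cont1 (hs : ContDiff ℝ 2 ω) : Continuous (deriv ω) :=
  (kpp_diff1' hs).continuous

lemma kpp_d2 (heq : ∀ x, deriv (deriv ω) x + 2 * deriv ω x + ω x - (ω x) ^ 2 = 0) :
    deriv (deriv ω) = fun x => (ω x) ^ 2 - ω x - 2 * deriv ω x := by
  funext x; have := heq x; linarith

lemma kpp_hd2 (hs : ContDiff ℝ 2 ω)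
    (heq : ∀ x, deriv (deriv ω) x + 2 * deriv ω x + ω x - (ω x) ^ 2 = 0) (x : ℝ) :
    HasDerivAt (deriv ω) ((ω x) ^ 2 - ω x - 2 * deriv ω x) x := by
  have := ((kpp_diff1' hs) x).hasDerivAt
  rwa [kpp_d2 heq] at this

lemma kpp_lt_one (hs : ContDiff ℝ 2 ω) (hneg : ∀ x, deriv ω x < 0)
    (hbot : Tendsto ω atBot (nhds 1)) (x : ℝ) : ω x < 1 := by
  have h : StrictAnti ω := strictAnti_of_deriv_neg hneg
  have h2 : ω x < ω (x - 1) := h (by linarith)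
  have h3 : ω (x - 1) ≤ 1 := by
    refine ge_of_tendsto hbot ?_
    filter_upwards [eventually_le_atBot (x - 1)] with t ht
    exact (h.antitone ht)
  linarith

/-- the Riccati variable -/
noncomputable def kq (ω : ℝ → ℝ) : ℝ → ℝ := fun t => deriv ω t / (ω t - 1)

lemma kq_pos (hs : ContDiff ℝ 2 ω) (hneg : ∀ x, deriv ω x < 0)
    (hbot : Tendsto ω atBot (nhds 1)) (x : ℝ) : 0 < kq ω x :=
  div_pos_of_neg_of_neg (hneg x) (by linarith [kpp_lt_one hs hneg hbot x])

lemma kq_cont (hs : ContDiff ℝ 2 ω) (hneg : ∀ x, deriv ω x < 0)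
    (hbot : Tendsto ω atBot (nhds 1)) : Continuous (kq ω) := by
  refine (kpp_cont1 hs).div ((kpp_diff hs).continuous.sub continuous_const) ?_
  intro x; have := kpp_lt_one hs hneg hbot x; intro h; linarith [sub_eq_zero.mp h]

lemma kq_hasDeriv (hs : ContDiff ℝ 2 ω)
    (heq : ∀ x, deriv (deriv ω) x + 2 * deriv ω x + ω x - (ω x) ^ 2 = 0)
    (hneg : ∀ x, deriv ω x < 0) (hbot : Tendsto ω atBot (nhds 1)) (x : ℝ) :
    HasDerivAt (kq ω) (ω x - 2 * kq ω x - (kq ω x) ^ 2) x := by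
  have hne : ω x - 1 ≠ 0 := by have := kpp_lt_one hs hneg hbot x; intro h; linarith [sub_eq_zero.mp h]
  have h1 : HasDerivAt (fun t => ω t - 1) (deriv ω x) x := ((kpp_diff hs x).hasDerivAt).sub_const 1
  have h2 := (kpp_hd2 hs heq x).div h1 hne
  refine h2.congr_deriv (Eq.symm ?_)
  unfold kq
  field_simp

lemma kq_deriv (hs : ContDiff ℝ 2 ω)
    (heq : ∀ x, deriv (deriv ω) x + 2 * deriv ω x + ω x - (ω x) ^ 2 = 0)
    (hneg : ∀ x, deriv ω x < 0) (hbot : Tendsto ω atBot (nhds 1)) (x : ℝ) :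
    deriv (kq ω) x = ω x - 2 * kq ω x - (kq ω x) ^ 2 :=
  (kq_hasDeriv hs heq hneg hbot x).deriv

/-- main barrier estimate: q stays in [3/10, 2) far to the left -/
lemma kq_bounds (hs : ContDiff ℝ 2 ω)
    (heq : ∀ x, deriv (deriv ω) x + 2 * deriv ω x + ω x - (ω x) ^ 2 = 0)
    (hneg : ∀ x, deriv ω x < 0) (hbot : Tendsto ω atBot (nhds 1)) :
    ∃ b : ℝ, b ≤ -1 ∧ ∀ x ≤ b, 3/10 ≤ kq ω x ∧ kq ω x < 2 := by
  have hq_pos := kq_pos hs hneg hbot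
  have hq_cont := kq_cont hs hneg hbot
  have hq_d := kq_hasDeriv hs heq hneg hbot
  have hlt1 := kpp_lt_one hs hneg hbot
  obtain ⟨b0, hb0⟩ : ∃ b0, ∀ x ≤ b0, 9/10 < ω x := by
    have := hbot.eventually (eventually_gt_nhds (by norm_num : (9/10 : ℝ) < 1))
    rcases this.exists_forall_of_atBot with ⟨b0, hb0⟩
    exact ⟨b0, hb0⟩
  refine ⟨min b0 (-1), min_le_right _ _, ?_⟩
  intro x1 hx1
  have hx1b0 : x1 ≤ b0 := le_trans hx1 (min_le_left _ _)
  constructor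
  · -- lower bound
    by_contra hlow
    push_neg at hlow
    -- Sub-claim: q < 3/10 on Iic x1
    have hA : ∀ x ≤ x1, kq ω x < 3/10 := by
      intro x2 hx2
      by_contra hge
      push_neg at hge
      have hx2lt : x2 < x1 := lt_of_le_of_ne hx2 (by rintro rfl; linarith)
      set E : Set ℝ := Icc x2 x1 ∩ (kq ω) ⁻¹' (Ici (3/10)) with hE
      have hEclosed : IsClosed E := isClosed_Icc.inter (isClosed_Ici.preimage hq_cont)
      have hEne : E.Nonempty := ⟨x2, ⟨le_rfl, hx2lt.le⟩, hge⟩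
      have hEbdd : BddAbove E := ⟨x1, fun t ht => ht.1.2⟩
      obtain ⟨xs, hmem, hxsub⟩ : ∃ xs, xs ∈ E ∧ ∀ t ∈ E, t ≤ xs :=
        ⟨sSup E, hEclosed.csSup_mem hEne hEbdd, fun t ht => le_csSup hEbdd ht⟩
      have hxs1 : xs ≤ x1 := hmem.1.2
      have hxsq : 3/10 ≤ kq ω xs := hmem.2
      have hxslt : xs < x1 := lt_of_le_of_ne hxs1 (by rintro rfl; linarith)
      have hint : ∀ t ∈ Ioo xs x1, kq ω t < 3/10 := by
        intro t ht
        by_contra htge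
        push_neg at htge
        have : t ∈ E := ⟨⟨le_trans hmem.1.1 ht.1.le, ht.2.le⟩, htge⟩
        exact absurd (hxsub t this) (not_le.mpr ht.1)
      have hmono : StrictMonoOn (kq ω) (Icc xs x1) := by
        refine strictMonoOn_of_deriv_pos (convex_Icc _ _) (hq_cont.continuousOn) ?_
        intro t ht
        rw [interior_Icc] at ht
        rw [kq_deriv hs heq hneg hbot t]
        have h1 : kq ω t < 3/10 := hint t ht
        have h2 : 0 < kq ω t := hq_pos t
        have h3 : 9/10 < ω t := hb0 t (le_trans ht.2.le hx1b0)
        nlinarith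
      have := hmono ⟨le_rfl, hxslt.le⟩ ⟨hxslt.le, le_rfl⟩ hxslt
      linarith
    -- MVT on [x1 - 2, x1]
    obtain ⟨c, hc, hslope⟩ := exists_hasDerivAt_eq_slope (kq ω)
      (fun t => ω t - 2 * kq ω t - (kq ω t) ^ 2) (by linarith : x1 - 2 < x1)
      hq_cont.continuousOn (fun t _ => hq_d t)
    have hcq : kq ω c < 3/10 := hA c hc.2.le
    have hcq0 : 0 < kq ω c := hq_pos c
    have hcom : 9/10 < ω c := hb0 c (le_trans hc.2.le hx1b0)
    have hlb : (21 : ℝ)/100 ≤ (kq ω x1 - kq ω (x1 - 2)) / (x1 - (x1 - 2)) := by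
      rw [← hslope]; nlinarith
    have h1 : 0 < kq ω (x1 - 2) := hq_pos _
    have h2 : kq ω x1 < 3/10 := hlow
    rw [show x1 - (x1 - 2) = 2 by ring] at hlb
    linarith
  · -- upper bound
    by_contra hhigh
    push_neg at hhigh
    -- Sub-claim: q ≥ 2 on Iic x1
    have hB : ∀ x ≤ x1, 2 ≤ kq ω x := by
      intro x2 hx2
      by_contra hlt
      push_neg at hlt
      have hx2lt : x2 < x1 := lt_of_le_of_ne hx2 (by rintro rfl; linarith)
      set E : Set ℝ := Icc x2 x1 ∩ (kq ω) ⁻¹' (Ici 2) with hE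
      have hEclosed : IsClosed E := isClosed_Icc.inter (isClosed_Ici.preimage hq_cont)
      have hEne : E.Nonempty := ⟨x1, ⟨hx2lt.le, le_rfl⟩, hhigh⟩
      have hEbdd : BddBelow E := ⟨x2, fun t ht => ht.1.1⟩
      obtain ⟨xs, hmem, hxslb⟩ : ∃ xs, xs ∈ E ∧ ∀ t ∈ E, xs ≤ t :=
        ⟨sInf E, hEclosed.csInf_mem hEne hEbdd, fun t ht => csInf_le hEbdd ht⟩
      have hxs2 : x2 ≤ xs := hmem.1.1
      have hxsq : 2 ≤ kq ω xs := hmem.2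
      have hxsgt : x2 < xs := lt_of_le_of_ne hxs2 (by rintro rfl; linarith)
      -- find δ: on [xs - δ, xs], q > 7/4, with xs - δ ≥ x2
      have hcontxs : ContinuousAt (kq ω) xs := hq_cont.continuousAt
      have hev : ∀ᶠ t in nhds xs, 7/4 < kq ω t :=
        hcontxs.eventually (eventually_gt_nhds (by linarith))
      obtain ⟨δ0, hδ0pos, hδ0⟩ := Metric.eventually_nhds_iff.mp hev
      set δ := min (δ0/2) (xs - x2) with hδ
      have hδpos : 0 < δ := lt_min (by linarith) (by linarith)
      have hδle : δ ≤ δ0/2 := min_le_left _ _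
      have hδle2 : δ ≤ xs - x2 := min_le_right _ _
      have h74 : ∀ t ∈ Icc (xs - δ) xs, 7/4 < kq ω t := by
        intro t ht
        have ht1 := ht.1; have ht2 := ht.2
        apply hδ0
        rw [Real.dist_eq, abs_lt]
        constructor <;> linarith
      -- q < 2 left of xs
      have hleft : kq ω (xs - δ) < 2 := by
        by_contra hge2
        push_neg at hge2
        have : xs - δ ∈ E := ⟨⟨by linarith, by linarith [hmem.1.2]⟩, hge2⟩
        have := hxslb _ this
        linarith
      have hanti : StrictAntiOn (kq ω) (Icc (xs - δ) xs) := by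
        refine strictAntiOn_of_deriv_neg (convex_Icc _ _) (hq_cont.continuousOn) ?_
        intro t ht
        rw [interior_Icc] at ht
        rw [kq_deriv hs heq hneg hbot t]
        have h1 : 7/4 < kq ω t := h74 t ⟨ht.1.le, ht.2.le⟩
        have h2 : ω t < 1 := hlt1 t
        nlinarith
      have := hanti ⟨le_rfl, by linarith⟩ ⟨by linarith, le_rfl⟩ (by linarith)
      linarith
    -- blow-up argument via R = 1/q on [x1 - 1, x1]
    have hRd : ∀ t, HasDerivAt (fun t => (kq ω t)⁻¹)
        (-(ω t - 2 * kq ω t - (kq ω t) ^ 2) / (kq ω t) ^ 2) t := by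
      intro t
      exact (hq_d t).inv (ne_of_gt (hq_pos t))
    obtain ⟨c, hc, hslope⟩ := exists_hasDerivAt_eq_slope (fun t => (kq ω t)⁻¹)
      (fun t => -(ω t - 2 * kq ω t - (kq ω t) ^ 2) / (kq ω t) ^ 2)
      (by linarith : x1 - 1 < x1)
      ((hq_cont.inv₀ (fun t => ne_of_gt (hq_pos t))).continuousOn)
      (fun t _ => hRd t)
    have hcq : 2 ≤ kq ω c := hB c hc.2.le
    have hcom : ω c < 1 := hlt1 c
    have hge1 : (1:ℝ) ≤ -(ω c - 2 * kq ω c - (kq ω c) ^ 2) / (kq ω c) ^ 2 := by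
      rw [le_div_iff₀ (by positivity)]
      nlinarith
    rw [hslope] at hge1
    rw [show x1 - (x1 - 1) = 1 by ring] at hge1
    have h1 : 0 < (kq ω (x1 - 1))⁻¹ := inv_pos.mpr (hq_pos _)
    have h2 : (kq ω x1)⁻¹ ≤ 1/2 := by
      have := one_div_le_one_div_of_le (by norm_num : (0:ℝ) < 2) hhigh
      rw [one_div] at this; linarith
    rw [div_one] at hge1
    linarith

lemma ku_pos (hs : ContDiff ℝ 2 ω) (hneg : ∀ x, deriv ω x < 0)
    (hbot : Tendsto ω atBot (nhds 1)) (x : ℝ) : 0 < 1 - ω x := by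
  linarith [kpp_lt_one hs hneg hbot x]

lemma ku_log (hs : ContDiff ℝ 2 ω)
    (heq : ∀ x, deriv (deriv ω) x + 2 * deriv ω x + ω x - (ω x) ^ 2 = 0)
    (hneg : ∀ x, deriv ω x < 0) (hbot : Tendsto ω atBot (nhds 1))
    {b : ℝ} (hb : ∀ x ≤ b, 3/10 ≤ kq ω x ∧ kq ω x < 2) :
    ∀ x y : ℝ, x ≤ y → y ≤ b →
      (3/10)*(y-x) ≤ Real.log (1-ω y) - Real.log (1-ω x) ∧
      Real.log (1-ω y) - Real.log (1-ω x) ≤ 2*(y-x) := by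
  have hupos := ku_pos hs hneg hbot
  have hL : ∀ t, HasDerivAt (fun t => Real.log (1 - ω t)) (kq ω t) t := by
    intro t
    have h1 : HasDerivAt (fun t => 1 - ω t) (-deriv ω t) t :=
      (((kpp_diff hs) t).hasDerivAt).const_sub 1
    have h2 := (Real.hasDerivAt_log (ne_of_gt (hupos t))).comp t h1
    refine h2.congr_deriv (Eq.symm ?_)
    unfold kq
    rw [div_eq_mul_inv, show (ω t - 1) = -(1 - ω t) by ring, inv_neg]
    ring
  intro x y hxy hyb
  rcases eq_or_lt_of_le hxy with rfl | hlt
  · simp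
  · obtain ⟨c, hc, hslope⟩ := exists_hasDerivAt_eq_slope (fun t => Real.log (1 - ω t))
      (kq ω) hlt (fun t _ => (hL t).continuousAt.continuousWithinAt) (fun t _ => hL t)
    have hcb : c ≤ b := le_trans hc.2.le hyb
    obtain ⟨h1, h2⟩ := hb c hcb
    rw [hslope] at h1 h2
    have hyx : 0 < y - x := by linarith
    constructor
    · have := (le_div_iff₀ hyx).mp h1
      linarith
    · have := (div_le_iff₀ hyx).mp h2.le
      linarith

lemma ku_exp_low (hs : ContDiff ℝ 2 ω)
    (heq : ∀ x, deriv (deriv ω) x + 2 * deriv ω x + ω x - (ω x) ^ 2 = 0)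
    (hneg : ∀ x, deriv ω x < 0) (hbot : Tendsto ω atBot (nhds 1))
    {b : ℝ} (hb : ∀ x ≤ b, 3/10 ≤ kq ω x ∧ kq ω x < 2) :
    ∀ x y : ℝ, x ≤ y → y ≤ b →
      1 - ω x ≤ (1 - ω y) * Real.exp ((3/10)*(x-y)) := by
  intro x y hxy hyb
  have h := (ku_log hs heq hneg hbot hb x y hxy hyb).1
  have hupos := ku_pos hs hneg hbot
  have : Real.log (1 - ω x) ≤ Real.log (1 - ω y) + (3/10)*(x-y) := by linarith
  calc 1 - ω x = Real.exp (Real.log (1 - ω x)) := (Real.exp_log (hupos x)).symm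
    _ ≤ Real.exp (Real.log (1 - ω y) + (3/10)*(x-y)) := Real.exp_le_exp.mpr this
    _ = (1 - ω y) * Real.exp ((3/10)*(x-y)) := by
        rw [Real.exp_add, Real.exp_log (hupos y)]

lemma ku_exp_high (hs : ContDiff ℝ 2 ω)
    (heq : ∀ x, deriv (deriv ω) x + 2 * deriv ω x + ω x - (ω x) ^ 2 = 0)
    (hneg : ∀ x, deriv ω x < 0) (hbot : Tendsto ω atBot (nhds 1))
    {b : ℝ} (hb : ∀ x ≤ b, 3/10 ≤ kq ω x ∧ kq ω x < 2) :
    ∀ x y : ℝ, x ≤ y → y ≤ b →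
      1 - ω y ≤ (1 - ω x) * Real.exp (2*(y-x)) := by
  intro x y hxy hyb
  have h := (ku_log hs heq hneg hbot hb x y hxy hyb).2
  have hupos := ku_pos hs hneg hbot
  have : Real.log (1 - ω y) ≤ Real.log (1 - ω x) + 2*(y-x) := by linarith
  calc 1 - ω y = Real.exp (Real.log (1 - ω y)) := (Real.exp_log (hupos y)).symm
    _ ≤ Real.exp (Real.log (1 - ω x) + 2*(y-x)) := Real.exp_le_exp.mpr this
    _ = (1 - ω x) * Real.exp (2*(y-x)) := by rw [Real.exp_add, Real.exp_log (hupos x)]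

/-- |ω'| ≤ 2 (1-ω) for x ≤ b, and |ω'| ≥ (3/10)(1-ω) -/
lemma komega'_bounds (hs : ContDiff ℝ 2 ω) (hneg : ∀ x, deriv ω x < 0)
    (hbot : Tendsto ω atBot (nhds 1))
    {b : ℝ} (hb : ∀ x ≤ b, 3/10 ≤ kq ω x ∧ kq ω x < 2) :
    ∀ x ≤ b, (3/10) * (1 - ω x) ≤ -deriv ω x ∧ -deriv ω x ≤ 2 * (1 - ω x) := by
  intro x hx
  obtain ⟨h1, h2⟩ := hb x hx
  have hu := ku_pos hs hneg hbot x
  unfold kq at h1 h2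
  have hc : ω x - 1 < 0 := by linarith
  have h1' : deriv ω x ≤ 3/10 * (ω x - 1) := (le_div_iff_of_neg hc).mp h1
  have h2' : 2 * (ω x - 1) < deriv ω x := (div_lt_iff_of_neg hc).mp h2
  constructor <;> linarith


lemma kpp_pos (hs : ContDiff ℝ 2 ω) (hneg : ∀ x, deriv ω x < 0)
    (htop : Tendsto ω atTop (nhds 0)) (x : ℝ) : 0 < ω x := by
  have h : StrictAnti ω := strictAnti_of_deriv_neg hneg
  have h2 : ω (x + 1) < ω x := h (by linarith)
  have h3 : 0 ≤ ω (x + 1) := by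
    refine le_of_tendsto htop ?_
    filter_upwards [eventually_ge_atTop (x + 1)] with t ht
    exact (h.antitone ht)
  linarith

lemma kh_cont (hs : ContDiff ℝ 2 ω) :
    Continuous (fun z => (deriv ω z)^2 * Real.exp (2*z)) :=
  ((kpp_cont1 hs).pow 2).mul (Real.continuous_exp.comp (continuous_const.mul continuous_id))

lemma kh_integrableOn (hs : ContDiff ℝ 2 ω)
    (heq : ∀ x, deriv (deriv ω) x + 2 * deriv ω x + ω x - (ω x) ^ 2 = 0)
    (hneg : ∀ x, deriv ω x < 0) (hbot : Tendsto ω atBot (nhds 1))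
    (htop : Tendsto ω atTop (nhds 0))
    {b : ℝ} (hb : ∀ x ≤ b, 3/10 ≤ kq ω x ∧ kq ω x < 2) (y : ℝ) :
    IntegrableOn (fun z => (deriv ω z)^2 * Real.exp (2*z)) (Iic y) := by
  have hIb : IntegrableOn (fun z => (deriv ω z)^2 * Real.exp (2*z)) (Iic b) := by
    refine Integrable.mono' ((kexp_integrableOn 2 b (by norm_num)).const_mul 4)
      ((kh_cont hs).aestronglyMeasurable.restrict) ?_
    filter_upwards [ae_restrict_mem measurableSet_Iic] with z hz
    have h1 := (komega'_bounds hs hneg hbot hb z hz).2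
    have h2 : 0 < ω z := kpp_pos hs hneg htop z
    have h3 : ω z < 1 := kpp_lt_one hs hneg hbot z
    have h4 := Real.exp_pos (2*z)
    rw [Real.norm_eq_abs, abs_of_nonneg (by positivity)]
    have e1 : deriv ω z ^2 ≤ 4*(1-ω z)^2 := by nlinarith [hneg z]
    have e2 : (1-ω z)^2 ≤ 1 := by nlinarith
    calc deriv ω z ^ 2 * Real.exp (2*z) ≤ (4*(1-ω z)^2) * Real.exp (2*z) :=
          mul_le_mul_of_nonneg_right e1 h4.le
      _ ≤ 4 * Real.exp (2*z) := by nlinarith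
  rcases le_or_gt y b with hyb | hby
  · exact hIb.mono_set (Iic_subset_Iic.mpr hyb)
  · have hIoc : IntegrableOn (fun z => (deriv ω z)^2 * Real.exp (2*z)) (Ioc b y) :=
      (kh_cont hs).integrableOn_Ioc
    refine (hIb.union hIoc).mono_set ?_
    intro z hz
    rcases le_or_gt z b with h | h
    · exact Or.inl h
    · exact Or.inr ⟨h, hz⟩

lemma kI_hasDeriv (hs : ContDiff ℝ 2 ω)
    (heq : ∀ x, deriv (deriv ω) x + 2 * deriv ω x + ω x - (ω x) ^ 2 = 0)
    (hneg : ∀ x, deriv ω x < 0) (hbot : Tendsto ω atBot (nhds 1))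
    (htop : Tendsto ω atTop (nhds 0))
    {b : ℝ} (hb : ∀ x ≤ b, 3/10 ≤ kq ω x ∧ kq ω x < 2) (y : ℝ) :
    HasDerivAt (fun t => ∫ z in Iic t, (deriv ω z)^2 * Real.exp (2*z))
      ((deriv ω y)^2 * Real.exp (2*y)) y := by
  have hfun : (fun t => ∫ z in Iic t, (deriv ω z)^2 * Real.exp (2*z)) =
      (fun t => (∫ z in Iic (y-1), (deriv ω z)^2 * Real.exp (2*z)) +
        ∫ z in (y-1)..t, (deriv ω z)^2 * Real.exp (2*z)) := by
    funext t
    rw [← integral_Iic_sub_Iic (kh_integrableOn hs heq hneg hbot htop hb (y-1))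
      (kh_integrableOn hs heq hneg hbot htop hb t)]
    ring
  rw [hfun]
  exact (((kh_cont hs).integral_hasStrictDerivAt (y-1) y).hasDerivAt).const_add _

lemma kI_nonneg (y : ℝ) : 0 ≤ ∫ z in Iic y, (deriv ω z)^2 * Real.exp (2*z) :=
  setIntegral_nonneg measurableSet_Iic (fun z _ => by positivity)

lemma kI_bound (hs : ContDiff ℝ 2 ω)
    (heq : ∀ x, deriv (deriv ω) x + 2 * deriv ω x + ω x - (ω x) ^ 2 = 0)
    (hneg : ∀ x, deriv ω x < 0) (hbot : Tendsto ω atBot (nhds 1))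
    (htop : Tendsto ω atTop (nhds 0))
    {b : ℝ} (hb : ∀ x ≤ b, 3/10 ≤ kq ω x ∧ kq ω x < 2) :
    ∀ y ≤ b, (∫ z in Iic y, (deriv ω z)^2 * Real.exp (2*z)) ≤
      2 * (1-ω y)^2 * Real.exp (2*y) := by
  intro y hy
  have hupos := ku_pos hs hneg hbot
  have hpt : ∀ z ∈ Iic y, (deriv ω z)^2 * Real.exp (2*z) ≤
      (4*(1-ω y)^2 * Real.exp (-(3/5)*y)) * Real.exp ((13/5)*z) := by
    intro z hz
    have hzy : z ≤ y := hz
    have hzb : z ≤ b := le_trans hzy hy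
    have h1 := (komega'_bounds hs hneg hbot hb z hzb).2
    have h2 : 1 - ω z ≤ (1 - ω y) * Real.exp ((3/10)*(z-y)) :=
      ku_exp_low hs heq hneg hbot hb z y hzy hy
    have hsq : (deriv ω z)^2 ≤ (2*(1-ω z))^2 := by
      have := hneg z
      have := hupos z
      nlinarith
    have hsq2 : (2*(1-ω z))^2 ≤ (2*(1 - ω y) * Real.exp ((3/10)*(z-y)))^2 := by
      have h3 : 0 ≤ 2*(1-ω z) := by linarith [hupos z]
      nlinarith [hupos z, Real.exp_pos ((3/10)*(z-y)), hupos y]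
    have e1 : Real.exp ((3/10)*(z-y)) ^ 2 * Real.exp (2*z) =
        Real.exp (-(3/5)*y) * Real.exp ((13/5)*z) := by
      rw [sq, ← Real.exp_add, ← Real.exp_add, ← Real.exp_add]
      congr 1; ring
    have hexp : (2*(1 - ω y) * Real.exp ((3/10)*(z-y)))^2 * Real.exp (2*z) =
        (4*(1-ω y)^2 * Real.exp (-(3/5)*y)) * Real.exp ((13/5)*z) := by
      calc (2*(1 - ω y) * Real.exp ((3/10)*(z-y)))^2 * Real.exp (2*z)
          = 4*(1-ω y)^2 * (Real.exp ((3/10)*(z-y))^2 * Real.exp (2*z)) := by ring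
        _ = _ := by rw [e1]; ring
    calc (deriv ω z)^2 * Real.exp (2*z)
        ≤ (2*(1 - ω y) * Real.exp ((3/10)*(z-y)))^2 * Real.exp (2*z) := by
          have := Real.exp_pos (2*z)
          exact mul_le_mul_of_nonneg_right (le_trans hsq hsq2) this.le
      _ = _ := hexp
  have hint2 : IntegrableOn (fun z => (4*(1-ω y)^2 * Real.exp (-(3/5)*y)) *
      Real.exp ((13/5)*z)) (Iic y) :=
    (kexp_integrableOn (13/5) y (by norm_num)).const_mul _
  have hmono := setIntegral_mono_on (kh_integrableOn hs heq hneg hbot htop hb y)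
    hint2 measurableSet_Iic hpt
  refine le_trans hmono ?_
  rw [MeasureTheory.integral_const_mul, kexp_integral (13/5) y (by norm_num)]
  have hexp2 : Real.exp (-(3/5)*y) * Real.exp ((13/5)*y) = Real.exp (2*y) := by
    rw [← Real.exp_add]; congr 1; ring
  have h5 := Real.exp_pos (2*y)
  have h6 := hupos y
  calc 4*(1-ω y)^2 * Real.exp (-(3/5)*y) * (Real.exp ((13/5)*y)/(13/5))
      = (20/13) * (1-ω y)^2 * (Real.exp (-(3/5)*y) * Real.exp ((13/5)*y)) := by ring
    _ = (20/13) * (1-ω y)^2 * Real.exp (2*y) := by rw [hexp2]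
    _ ≤ 2 * (1-ω y)^2 * Real.exp (2*y) := by nlinarith

end

lemma kpp_diff1x {f : ℝ → ℝ} (hs : ContDiff ℝ 2 f) : Differentiable ℝ (deriv f) := by
  have h : ContDiff ℝ ((1 : ℕ) + 1) f := by exact_mod_cast hs
  exact (contDiff_succ_iff_deriv.mp h).2.2.differentiable (by norm_num)

set_option maxHeartbeats 1000000 in
theorem stmt_16
    (ω : ℝ → ℝ)
    (hω_smooth : ContDiff ℝ 2 ω)
    (hω_eq : ∀ x, deriv (deriv ω) x + 2 * deriv ω x + ω x - (ω x) ^ 2 = 0)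
    (hω_bot : Tendsto ω atBot (nhds 1))
    (hω_top : Tendsto ω atTop (nhds 0))
    (hω_half : ω 0 = 1 / 2)
    (hω_deriv : ∀ x, deriv ω x < 0)
    (Φ : ℝ → ℝ)
    (hΦ : ∀ x, Φ x = deriv ω x *
      ∫ y in (0:ℝ)..x, (Real.exp (-(2 * y)) / (deriv ω y) ^ 2) *
        ∫ z in Set.Iic y, (deriv ω z) ^ 2 * Real.exp (2 * z))
    :
    (∀ x, deriv (deriv Φ) x + 2 * deriv Φ x + (1 - 2 * ω x) * Φ x = deriv ω x) ∧
    Φ 0 = 0 ∧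
    Tendsto Φ atBot (nhds 0) ∧
    ∀ Ψ : ℝ → ℝ, ContDiff ℝ 2 Ψ →
      (∀ x, deriv (deriv Ψ) x + 2 * deriv Ψ x + (1 - 2 * ω x) * Ψ x = deriv ω x) →
      Ψ 0 = 0 → Tendsto Ψ atBot (nhds 0) → Ψ = Φ := by
  obtain ⟨b, hb1, hb⟩ := kq_bounds hω_smooth hω_eq hω_deriv hω_bot
  have hω'ne : ∀ x, deriv ω x ≠ 0 := fun x => ne_of_lt (hω_deriv x)
  have hupos : ∀ x, 0 < 1 - ω x := ku_pos hω_smooth hω_deriv hω_bot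
  have hule1 : ∀ x, 1 - ω x ≤ 1 := fun x => by
    linarith [kpp_pos hω_smooth hω_deriv hω_top x]
  have hw'_bds := komega'_bounds hω_smooth hω_deriv hω_bot hb
  -- definitions
  set Ig : ℝ → ℝ := fun y => ∫ z in Iic y, (deriv ω z)^2 * Real.exp (2*z) with hIgdef
  set g : ℝ → ℝ := fun y => Real.exp (-(2*y)) / (deriv ω y)^2 * Ig y with hgdef
  set J : ℝ → ℝ := fun x => ∫ y in (0:ℝ)..x, g y with hJdef
  have hΦeq : Φ = fun x => deriv ω x * J x := funext fun x => hΦ x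
  set D2 : ℝ → ℝ := fun x => (ω x)^2 - ω x - 2 * deriv ω x with hD2def
  have hIg_d : ∀ y, HasDerivAt Ig ((deriv ω y)^2 * Real.exp (2*y)) y :=
    fun y => kI_hasDeriv hω_smooth hω_eq hω_deriv hω_bot hω_top hb y
  have hE_d : ∀ y : ℝ, HasDerivAt (fun t : ℝ => Real.exp (-(2*t))) (-2*Real.exp (-(2*y))) y := by
    intro y
    have h1 : HasDerivAt (fun t : ℝ => -(2*t)) (-2) y := by
      simpa using ((hasDerivAt_id y).const_mul (-2 : ℝ))
    simpa [mul_comm] using h1.exp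
  have hB_d : ∀ y, HasDerivAt (fun t => (deriv ω t)^2) (2 * deriv ω y * D2 y) y := by
    intro y
    have := (kpp_hd2 hω_smooth hω_eq y).fun_pow 2
    simpa [hD2def, mul_comm, mul_assoc] using this
  set gd : ℝ → ℝ := fun y =>
    ((-2*Real.exp (-(2*y)) * (deriv ω y)^2 - Real.exp (-(2*y)) * (2 * deriv ω y * D2 y)) /
      ((deriv ω y)^2)^2) * Ig y +
    Real.exp (-(2*y)) / (deriv ω y)^2 * ((deriv ω y)^2 * Real.exp (2*y)) with hgddef
  have hg_d : ∀ y, HasDerivAt g (gd y) y := by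
    intro y
    exact ((hE_d y).div (hB_d y) (pow_ne_zero 2 (hω'ne y))).mul (hIg_d y)
  have hg_c : Continuous g := by
    rw [continuous_iff_continuousAt]; exact fun y => (hg_d y).continuousAt
  have hJ_d : ∀ x, HasDerivAt J (g x) x :=
    fun x => (hg_c.integral_hasStrictDerivAt 0 x).hasDerivAt
  set Φ1 : ℝ → ℝ := fun x => D2 x * J x + deriv ω x * g x with hΦ1def
  have hΦ_d : ∀ x, HasDerivAt Φ (Φ1 x) x := by
    intro x
    rw [hΦeq]
    exact (kpp_hd2 hω_smooth hω_eq x).mul (hJ_d x)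
  have hderivΦ : deriv Φ = Φ1 := funext fun x => (hΦ_d x).deriv
  have hD2_d : ∀ x, HasDerivAt D2 (2 * ω x * deriv ω x - deriv ω x - 2 * D2 x) x := by
    intro x
    have h2 := ((kpp_diff hω_smooth) x).hasDerivAt
    have h3 := kpp_hd2 hω_smooth hω_eq x
    have := ((h2.pow 2).sub h2).sub (h3.const_mul 2)
    refine this.congr_deriv (Eq.symm ?_)
    simp only [hD2def]; ring
  set E : ℝ → ℝ := fun x => ((2 * ω x * deriv ω x - deriv ω x - 2 * D2 x) * J x + D2 x * g x)
      + (D2 x * g x + deriv ω x * gd x) with hEdef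
  have hΦ1_d : ∀ x, HasDerivAt Φ1 (E x) x := by
    intro x
    exact ((hD2_d x).mul (hJ_d x)).add ((kpp_hd2 hω_smooth hω_eq x).mul (hg_d x))
  have hderiv2Φ : ∀ x, deriv (deriv Φ) x = E x := by
    intro x
    rw [hderivΦ]
    exact (hΦ1_d x).deriv
  -- the ODE identity
  have hODEΦ : ∀ x, E x + 2 * Φ1 x + (1 - 2 * ω x) * Φ x = deriv ω x := by
    intro x
    rw [hΦeq]
    simp only [hEdef, hΦ1def, hgddef, hgdef, hD2def]
    have hw := hω'ne x
    simp only [Real.exp_neg]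
    field_simp
    ring
  have goal1 : ∀ x, deriv (deriv Φ) x + 2 * deriv Φ x + (1 - 2 * ω x) * Φ x = deriv ω x := by
    intro x
    rw [hderiv2Φ x, hderivΦ]
    exact hODEΦ x
  -- Φ 0 = 0
  have hJ0 : J 0 = 0 := intervalIntegral.integral_same
  have goal2 : Φ 0 = 0 := by rw [hΦeq]; simp [hJ0]
  -- g is nonnegative and bounded on Iic b
  have hg_nonneg : ∀ y, 0 ≤ g y := by
    intro y
    simp only [hgdef]
    have h1 := kI_nonneg (ω := ω) y
    positivity
  have hg_bd : ∀ y ≤ b, g y ≤ 23 := by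
    intro y hy
    have hIb := kI_bound hω_smooth hω_eq hω_deriv hω_bot hω_top hb y hy
    have hpos : (0:ℝ) < (deriv ω y)^2 := pow_two_pos_of_ne_zero (hω'ne y)
    have h2 : g y ≤ Real.exp (-(2*y)) / (deriv ω y)^2 * (2*(1-ω y)^2*Real.exp (2*y)) := by
      simp only [hgdef]
      exact mul_le_mul_of_nonneg_left hIb (by positivity)
    refine le_trans h2 ?_
    have h3 : (9/100)*(1-ω y)^2 ≤ (deriv ω y)^2 := by
      have := (hw'_bds y hy).1
      nlinarith [hupos y]
    have hexp1 : Real.exp (-(2*y)) * Real.exp (2*y) = 1 := by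
      rw [← Real.exp_add]; simp
    rw [div_mul_eq_mul_div, div_le_iff₀ hpos]
    have hrw : Real.exp (-(2*y)) * (2*(1-ω y)^2*Real.exp (2*y)) =
        2*(1-ω y)^2 * (Real.exp (-(2*y)) * Real.exp (2*y)) := by ring
    rw [hrw, hexp1, mul_one]
    nlinarith [hupos y]
  -- part 3 : Tendsto Φ atBot 0
  set K : ℝ := ∫ y in b..(0:ℝ), g y with hKdef
  have hgi : ∀ a c : ℝ, IntervalIntegrable g volume a c := fun a c => hg_c.intervalIntegrable a c
  have hJbd : ∀ x ≤ b, |J x| ≤ 23*(b-x) + |K| := by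
    intro x hx
    have hsplit : ∫ y in x..(0:ℝ), g y = (∫ y in x..b, g y) + K :=
      (integral_add_adjacent_intervals (hgi x b) (hgi b 0)).symm
    have h1 : (∫ y in x..b, g y) ≤ ∫ y in x..b, (23:ℝ) := by
      refine integral_mono_on hx (hgi x b) (intervalIntegrable_const) ?_
      intro t ht; exact hg_bd t ht.2
    have h2 : (0:ℝ) ≤ ∫ y in x..b, g y := by
      refine intervalIntegral.integral_nonneg hx ?_
      intro t _; exact hg_nonneg t
    rw [intervalIntegral.integral_const, smul_eq_mul] at h1
    have hJx : J x = -((∫ y in x..b, g y) + K) := by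
      rw [← hsplit]
      exact intervalIntegral.integral_symm x 0
    rw [hJx, abs_neg]
    calc |(∫ y in x..b, g y) + K| ≤ |∫ y in x..b, g y| + |K| := abs_add_le _ _
      _ ≤ 23*(b-x) + |K| := by
          rw [abs_of_nonneg h2]; gcongr; linarith
  have hbound : ∀ x ≤ b, ‖Φ x‖ ≤
      2*(1 - ω b) * Real.exp ((3/10)*(x-b)) * (23*(b-x) + |K|) := by
    intro x hx
    rw [hΦeq]
    have h1 : |deriv ω x| ≤ 2*(1-ω x) := by
      rw [abs_of_neg (hω_deriv x)]; exact (hw'_bds x hx).2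
    have h2 : 1 - ω x ≤ (1 - ω b) * Real.exp ((3/10)*(x-b)) :=
      ku_exp_low hω_smooth hω_eq hω_deriv hω_bot hb x b hx le_rfl
    have h3 := hJbd x hx
    have h4 : (0:ℝ) ≤ 23*(b-x) + |K| := by have := abs_nonneg K; linarith
    rw [Real.norm_eq_abs, abs_mul]
    calc |deriv ω x| * |J x| ≤ (2*(1-ω x)) * (23*(b-x) + |K|) := by
          apply mul_le_mul h1 h3 (abs_nonneg _) (by linarith [hupos x])
      _ ≤ 2*((1 - ω b) * Real.exp ((3/10)*(x-b))) * (23*(b-x) + |K|) := by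
          gcongr
      _ = 2*(1 - ω b) * Real.exp ((3/10)*(x-b)) * (23*(b-x) + |K|) := by ring
  have hφt : Tendsto (fun x : ℝ => (3/10)*(b-x)) atBot atTop := by
    apply Tendsto.const_mul_atTop (by norm_num : (0:ℝ) < 3/10)
    have h := tendsto_atTop_add_const_left atBot b tendsto_neg_atBot_atTop
    refine h.congr fun x => ?_
    ring
  have hG : Tendsto (fun x : ℝ => ((3/10)*(b-x)) * Real.exp (-((3/10)*(b-x)))) atBot (nhds 0) := by
    have h1 := Real.tendsto_pow_mul_exp_neg_atTop_nhds_zero 1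
    simp only [pow_one] at h1
    exact h1.comp hφt
  have hExp : Tendsto (fun x : ℝ => Real.exp (-((3/10)*(b-x)))) atBot (nhds 0) :=
    Real.tendsto_exp_atBot.comp (tendsto_neg_atTop_atBot.comp hφt)
  have hB : Tendsto (fun x : ℝ => 2*(1 - ω b) * Real.exp ((3/10)*(x-b)) * (23*(b-x) + |K|))
      atBot (nhds 0) := by
    have heq : (fun x : ℝ => 2*(1 - ω b) * Real.exp ((3/10)*(x-b)) * (23*(b-x) + |K|)) =
        (fun x : ℝ => 2*(1 - ω b) * ((230/3) * (((3/10)*(b-x)) * Real.exp (-((3/10)*(b-x))))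
          + |K| * Real.exp (-((3/10)*(b-x))))) := by
      funext x
      have : Real.exp ((3/10)*(x-b)) = Real.exp (-((3/10)*(b-x))) := by congr 1; ring
      rw [this]; ring
    rw [heq]
    have := ((hG.const_mul (230/3 : ℝ)).add (hExp.const_mul |K|)).const_mul (2*(1 - ω b))
    simpa using this
  have goal3 : Tendsto Φ atBot (nhds 0) := by
    refine squeeze_zero_norm' ?_ hB
    filter_upwards [eventually_le_atBot b] with x hx
    exact hbound x hx
  refine ⟨goal1, goal2, goal3, ?_⟩
  -- part 4 : uniqueness
  intro Ψ hΨs hΨeq hΨ0 hΨbot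
  have hΨdiff : Differentiable ℝ Ψ := hΨs.differentiable (by norm_num)
  have hΨd1 : ∀ x, HasDerivAt Ψ (deriv Ψ x) x := fun x => (hΨdiff x).hasDerivAt
  have hΨd2 : ∀ x, HasDerivAt (deriv Ψ) (deriv (deriv Ψ) x) x :=
    fun x => ((kpp_diff1x hΨs) x).hasDerivAt
  set D : ℝ → ℝ := fun x => Ψ x - Φ x with hDdef
  set D1 : ℝ → ℝ := fun x => deriv Ψ x - Φ1 x with hD1def
  have hD_d : ∀ x, HasDerivAt D (D1 x) x := fun x => (hΨd1 x).sub (hΦ_d x)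
  have hD1_d : ∀ x, HasDerivAt D1 (deriv (deriv Ψ) x - E x) x :=
    fun x => (hΨd2 x).sub (hΦ1_d x)
  have hhom : ∀ x, deriv (deriv Ψ) x - E x = -2 * D1 x - (1 - 2 * ω x) * D x := by
    intro x
    have h1 := hΨeq x
    have h2 := hODEΦ x
    simp only [hDdef, hD1def]
    linear_combination h1 - h2
  set W : ℝ → ℝ := fun x => D1 x * deriv ω x - D x * D2 x with hWdef
  have hW_d : ∀ x, HasDerivAt W (-2 * W x) x := by
    intro x
    have raw := ((hD1_d x).mul (kpp_hd2 hω_smooth hω_eq x)).sub ((hD_d x).mul (hD2_d x))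
    refine raw.congr_deriv (Eq.symm ?_)
    simp only [hWdef, hD2def]
    linear_combination (-(deriv ω x)) * (hhom x)
  have hexp2_d : ∀ x : ℝ, HasDerivAt (fun t : ℝ => Real.exp (2*t)) (2 * Real.exp (2*x)) x := by
    intro x
    have h1 : HasDerivAt (fun t : ℝ => (2:ℝ)*t) 2 x := by
      simpa using ((hasDerivAt_id x).const_mul (2:ℝ))
    simpa [mul_comm] using h1.exp
  have hVd : ∀ x, HasDerivAt (fun t => W t * Real.exp (2*t)) 0 x := by
    intro x
    have := (hW_d x).mul (hexp2_d x)
    refine this.congr_deriv (Eq.symm ?_)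
    ring
  have hVconst := is_const_of_deriv_eq_zero (f := fun t => W t * Real.exp (2*t))
    (fun x => (hVd x).differentiableAt) (fun x => (hVd x).deriv)
  have hWx : ∀ x, W x = W 0 * Real.exp (-(2*x)) := by
    intro x
    have h := hVconst x 0
    simp only [mul_zero, Real.exp_zero, mul_one] at h
    rw [Real.exp_neg]
    have he := Real.exp_ne_zero (2*x)
    field_simp
    linarith [h]
  have hG_d : ∀ x, HasDerivAt (fun t => D t / deriv ω t) (W x / (deriv ω x)^2) x := by
    intro x
    exact (hD_d x).div (kpp_hd2 hω_smooth hω_eq x) (hω'ne x)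
  have hf0_c : Continuous (fun y => Real.exp (-(2*y)) / (deriv ω y)^2) := by
    refine Continuous.div (Real.continuous_exp.comp (continuous_const.mul continuous_id).neg) ?_ ?_
    · exact (kpp_cont1 hω_smooth).pow 2
    · exact fun x => pow_ne_zero 2 (hω'ne x)
  have hFTC : ∀ x : ℝ, ∫ y in (0:ℝ)..x, W 0 * (Real.exp (-(2*y)) / (deriv ω y)^2) =
      D x / deriv ω x - D 0 / deriv ω 0 := by
    intro x
    refine intervalIntegral.integral_eq_sub_of_hasDerivAt
      (f := fun t => D t / deriv ω t) (fun t _ => ?_) ?_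
    · have := hG_d t
      rw [hWx t] at this
      refine this.congr_deriv (Eq.symm ?_)
      ring
    · exact (continuous_const.mul hf0_c).intervalIntegrable 0 x
  have hD0 : D 0 = 0 := by simp [hDdef, hΨ0, goal2]
  have hDx : ∀ x, D x = deriv ω x * (W 0 * ∫ y in (0:ℝ)..x, Real.exp (-(2*y)) / (deriv ω y)^2) := by
    intro x
    have h := hFTC x
    rw [hD0, intervalIntegral.integral_const_mul] at h
    have hne := hω'ne x
    field_simp at h ⊢
    simp only [mul_zero, zero_div, sub_zero] at h
    linarith [h]
  by_cases hW0 : W 0 = 0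
  · funext x
    have := hDx x
    rw [hW0] at this
    simp only [hDdef] at this
    simp at this
    linarith
  · exfalso
    have hDtend : Tendsto D atBot (nhds 0) := by
      have := hΨbot.sub goal3
      simpa using this
    set C0 : ℝ := |W 0| * ((3/40) * Real.exp (-6)) with hC0
    have hC0pos : 0 < C0 := by
      rw [hC0]
      exact mul_pos (abs_pos.mpr hW0) (mul_pos (by norm_num) (Real.exp_pos _))
    have hgrow : ∀ x ≤ b - 1, C0 * Real.exp (-(2*x)) ≤ |D x| := by
      intro x hx
      have hxb : x ≤ b := by linarith
      have hx1b : x + 1 ≤ b := by linarith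
      have hux : 0 < 1 - ω x := hupos x
      have hptw : ∀ y ∈ Icc x (x+1),
          Real.exp (-(2*(x+1))) / (2*(1-ω x)*Real.exp 2)^2 ≤
            Real.exp (-(2*y)) / (deriv ω y)^2 := by
        intro y hy
        have hyb : y ≤ b := le_trans hy.2 hx1b
        have h1 : 1 - ω y ≤ (1 - ω x) * Real.exp (2*(y-x)) :=
          ku_exp_high hω_smooth hω_eq hω_deriv hω_bot hb x y hy.1 hyb
        have h2 : Real.exp (2*(y-x)) ≤ Real.exp 2 := by
          rw [Real.exp_le_exp]; linarith [hy.2]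
        have h3 : -deriv ω y ≤ 2*(1-ω x)*Real.exp 2 := by
          have := (hw'_bds y hyb).2
          have hp := (hupos x)
          nlinarith [Real.exp_pos (2*(y-x))]
        have h4 : (deriv ω y)^2 ≤ (2*(1-ω x)*Real.exp 2)^2 := by
          have h5 : 0 ≤ -deriv ω y := by linarith [hω_deriv y]
          nlinarith
        have h6 : Real.exp (-(2*(x+1))) ≤ Real.exp (-(2*y)) := by
          rw [Real.exp_le_exp]; linarith [hy.2]
        have h7 : 0 < (deriv ω y)^2 := pow_two_pos_of_ne_zero (hω'ne y)
        exact div_le_div₀ (Real.exp_pos _).le h6 h7 h4 |>.trans_eq rfl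
      have hii : IntervalIntegrable (fun y => Real.exp (-(2*y)) / (deriv ω y)^2) volume x (x+1) :=
        hf0_c.intervalIntegrable _ _
      have hint1 : Real.exp (-(2*(x+1))) / (2*(1-ω x)*Real.exp 2)^2 ≤
          ∫ y in x..(x+1), Real.exp (-(2*y)) / (deriv ω y)^2 := by
        have := intervalIntegral.integral_mono_on (by linarith : x ≤ x + 1)
          (intervalIntegrable_const) hii hptw
        rw [intervalIntegral.integral_const, smul_eq_mul] at this
        simpa using this
      have hint2 : (0:ℝ) ≤ ∫ y in (x+1)..0, Real.exp (-(2*y)) / (deriv ω y)^2 := by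
        refine intervalIntegral.integral_nonneg (by linarith) ?_
        intro t _; positivity
      have hsplit : (∫ y in x..(0:ℝ), Real.exp (-(2*y)) / (deriv ω y)^2) =
          (∫ y in x..(x+1), Real.exp (-(2*y)) / (deriv ω y)^2) +
          ∫ y in (x+1)..0, Real.exp (-(2*y)) / (deriv ω y)^2 :=
        (integral_add_adjacent_intervals (hf0_c.intervalIntegrable _ _)
          (hf0_c.intervalIntegrable _ _)).symm
      have hIx0 : Real.exp (-(2*(x+1))) / (2*(1-ω x)*Real.exp 2)^2 ≤
          ∫ y in x..(0:ℝ), Real.exp (-(2*y)) / (deriv ω y)^2 := by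
        rw [hsplit]; linarith
      have hDval := hDx x
      have hsymm : (∫ y in (0:ℝ)..x, Real.exp (-(2*y)) / (deriv ω y)^2) =
          -(∫ y in x..(0:ℝ), Real.exp (-(2*y)) / (deriv ω y)^2) :=
        intervalIntegral.integral_symm x 0
      set Ix0 : ℝ := ∫ y in x..(0:ℝ), Real.exp (-(2*y)) / (deriv ω y)^2 with hIx0def
      have hIx0pos : 0 < Ix0 := lt_of_lt_of_le (by positivity) hIx0
      have hDabs : |D x| = (-deriv ω x) * (|W 0| * Ix0) := by
        rw [hDval, hsymm]
        rw [abs_mul, abs_mul, abs_of_neg (hω_deriv x), abs_neg, abs_of_pos hIx0pos]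
      rw [hDabs]
      have hw'low := (hw'_bds x hxb).1
      have hexpeq : Real.exp (-(2*(x+1))) = Real.exp (-(2*x)) * Real.exp (-2) := by
        rw [← Real.exp_add]; congr 1; ring
      have hstep : C0 * Real.exp (-(2*x)) ≤
          ((3/10)*(1-ω x)) * (|W 0| * (Real.exp (-(2*(x+1))) / (2*(1-ω x)*Real.exp 2)^2)) := by
        rw [hexpeq, hC0]
        have hue : 1 - ω x ≤ 1 := hule1 x
        have he2 : (0:ℝ) < Real.exp 2 := Real.exp_pos 2
        rw [div_eq_mul_inv]
        have hkey : Real.exp (-6) ≤ Real.exp (-2) * ((2*(1-ω x)*Real.exp 2)^2)⁻¹ * ((1-ω x) * 4) := by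
          have h11 : Real.exp (-2) * ((2*(1-ω x)*Real.exp 2)^2)⁻¹ * ((1-ω x) * 4)
              = Real.exp (-6) * (1-ω x)⁻¹ := by
            have he6' : Real.exp (-6) = Real.exp (-2) / (Real.exp 2)^2 := by
              rw [eq_div_iff (by positivity), sq, ← Real.exp_add, ← Real.exp_add]
              norm_num
            rw [he6']
            field_simp
            ring
          rw [h11]
          have h10 : (1:ℝ) ≤ (1-ω x)⁻¹ := by
            rw [le_inv_comm₀ one_pos hux]
            simpa using hue
          nlinarith [Real.exp_pos (-6)]
        calc |W 0| * ((3/40) * Real.exp (-6)) * Real.exp (-(2*x))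
            ≤ |W 0| * ((3/40) * (Real.exp (-2) * ((2*(1-ω x)*Real.exp 2)^2)⁻¹ * ((1-ω x) * 4)))
              * Real.exp (-(2*x)) := by
              have := abs_nonneg (W 0)
              have := (Real.exp_pos (-(2*x))).le
              gcongr
          _ = (3/10)*(1-ω x) * (|W 0| * (Real.exp (-(2*x)) * Real.exp (-2) *
              ((2*(1-ω x)*Real.exp 2)^2)⁻¹)) := by ring
      refine le_trans hstep ?_
      have hnn : (0:ℝ) ≤ |W 0| := abs_nonneg _
      have hfrac : Real.exp (-(2*(x+1))) / (2*(1-ω x)*Real.exp 2)^2 ≤ Ix0 := hIx0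
      have h30 : (0:ℝ) ≤ (3/10)*(1-ω x) := by positivity
      calc ((3/10)*(1-ω x)) * (|W 0| * (Real.exp (-(2*(x+1))) / (2*(1-ω x)*Real.exp 2)^2))
          ≤ ((3/10)*(1-ω x)) * (|W 0| * Ix0) := by gcongr
        _ ≤ (-deriv ω x) * (|W 0| * Ix0) := by
            have : (0:ℝ) ≤ |W 0| * Ix0 := mul_nonneg hnn hIx0pos.le
            gcongr
    have htend2 : Tendsto (fun x => C0 * Real.exp (-(2*x))) atBot atTop := by
      apply Tendsto.const_mul_atTop hC0pos
      apply Real.tendsto_exp_atTop.comp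
      have h := tendsto_neg_atBot_atTop.const_mul_atTop (by norm_num : (0:ℝ) < 2)
      refine h.congr fun x => ?_
      ring
    have hev1 : ∀ᶠ x in atBot, (2:ℝ) ≤ C0 * Real.exp (-(2*x)) := htend2.eventually_ge_atTop 2
    have hev2 : ∀ᶠ x in atBot, |D x| < 1 := by
      have hball : ∀ᶠ y in nhds (0:ℝ), |y| < 1 := by
        filter_upwards [Metric.ball_mem_nhds (0:ℝ) one_pos] with y hy
        simpa [Real.dist_eq] using hy
      exact hDtend.eventually hball
    have hev3 : ∀ᶠ x in atBot, x ≤ b - 1 := eventually_le_atBot _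
    obtain ⟨x, h1, h2, h3⟩ := (hev1.and (hev2.and hev3)).exists
    have := hgrow x h3
    linarith
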